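/- Let r₁, r₂ > 0. Then, as ε → 0⁺, λ₂(ε) − (3/2)·(1/r₁³ + 1/r₂³)·(r₁r₂/(r₁+r₂))·log( 2r₁r₂ / ((r₁+r₂)·ε) ) = O(1); that is, this difference remains bounded as ε → 0⁺. -/

import Mathlib

open Real Filter Topology


/-- Half-distance between the fixed points of the composed reflections. -/
noncomputable def alphaBi (r₁ r₂ ε : ℝ) : ℝ :=
  Real.sqrt (ε * (2 * r₁ + ε) * (2 * r₂ + ε) * (2 * r₁ + 2 * r₂ + ε)) /
    (2 * (r₁ + r₂ + ε))

/-- Bispherical coordinate of the boundary of the first sphere. -/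
noncomputable def xi1 (r₁ r₂ ε : ℝ) : ℝ := Real.arsinh (alphaBi r₁ r₂ ε / r₁)

/-- Bispherical coordinate of the boundary of the second sphere. -/
noncomputable def xi2 (r₁ r₂ ε : ℝ) : ℝ := Real.arsinh (alphaBi r₁ r₂ ε / r₂)

/-- Capacitance coefficient C₁₁. -/
noncomputable def C11 (r₁ r₂ ε : ℝ) : ℝ :=
  8 * π * alphaBi r₁ r₂ ε *
    ∑' n : ℕ, Real.exp ((2 * n + 1) * xi2 r₁ r₂ ε) /
      (Real.exp ((2 * n + 1) * (xi1 r₁ r₂ ε + xi2 r₁ r₂ ε)) - 1)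

/-- Capacitance coefficient C₂₂. -/
noncomputable def C22 (r₁ r₂ ε : ℝ) : ℝ :=
  8 * π * alphaBi r₁ r₂ ε *
    ∑' n : ℕ, Real.exp ((2 * n + 1) * xi1 r₁ r₂ ε) /
      (Real.exp ((2 * n + 1) * (xi1 r₁ r₂ ε + xi2 r₁ r₂ ε)) - 1)

/-- Capacitance coefficient C₁₂. -/
noncomputable def C12 (r₁ r₂ ε : ℝ) : ℝ :=
  -(8 * π * alphaBi r₁ r₂ ε *
    ∑' n : ℕ, 1 / (Real.exp ((2 * n + 1) * (xi1 r₁ r₂ ε + xi2 r₁ r₂ ε)) - 1))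

/-- Capacitance coefficient C₂₁. -/
noncomputable def C21 (r₁ r₂ ε : ℝ) : ℝ := C12 r₁ r₂ ε

/-- Rescaled capacitance coefficient C̃₁₁ = (3/(4π r₁³)) C₁₁. -/
noncomputable def Ct11 (r₁ r₂ ε : ℝ) : ℝ := 3 / (4 * π * r₁ ^ 3) * C11 r₁ r₂ ε

/-- Rescaled capacitance coefficient C̃₂₂ = (3/(4π r₂³)) C₂₂. -/
noncomputable def Ct22 (r₁ r₂ ε : ℝ) : ℝ := 3 / (4 * π * r₂ ^ 3) * C22 r₁ r₂ ε

/-- Rescaled capacitance coefficient C̃₁₂ = (3/(4π r₁³)) C₁₂. -/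
noncomputable def Ct12 (r₁ r₂ ε : ℝ) : ℝ := 3 / (4 * π * r₁ ^ 3) * C12 r₁ r₂ ε

/-- Rescaled capacitance coefficient C̃₂₁ = (3/(4π r₂³)) C₂₁. -/
noncomputable def Ct21 (r₁ r₂ ε : ℝ) : ℝ := 3 / (4 * π * r₂ ^ 3) * C21 r₁ r₂ ε

/-- Smaller eigenvalue of the rescaled capacitance matrix. -/
noncomputable def lam1 (r₁ r₂ ε : ℝ) : ℝ :=
  1 / 2 * (Ct11 r₁ r₂ ε + Ct22 r₁ r₂ ε -
    Real.sqrt ((Ct11 r₁ r₂ ε - Ct22 r₁ r₂ ε) ^ 2 + 4 * Ct12 r₁ r₂ ε * Ct21 r₁ r₂ ε))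

/-- Larger eigenvalue of the rescaled capacitance matrix. -/
noncomputable def lam2 (r₁ r₂ ε : ℝ) : ℝ :=
  1 / 2 * (Ct11 r₁ r₂ ε + Ct22 r₁ r₂ ε +
    Real.sqrt ((Ct11 r₁ r₂ ε - Ct22 r₁ r₂ ε) ^ 2 + 4 * Ct12 r₁ r₂ ε * Ct21 r₁ r₂ ε))


/-- Odd power series of artanh. -/
lemma hasSum_oddlog {y : ℝ} (h0 : 0 ≤ y) (h1 : y < 1) :
    HasSum (fun n : ℕ => y ^ (2 * n + 1) / (2 * n + 1))
      ((Real.log (1 + y) - Real.log (1 - y)) / 2) := by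
  have hy : |y| < 1 := by rw [abs_of_nonneg h0]; exact h1
  have hy2 : |y ^ 2| < 1 := by
    rw [abs_of_nonneg (sq_nonneg y)]; nlinarith
  set f : ℕ → ℝ := fun k => y ^ (k + 1) / (k + 1) with hf
  have h1s : HasSum f (-Real.log (1 - y)) := hasSum_pow_div_log_of_abs_lt_one hy
  have h2s : HasSum (fun m : ℕ => (y ^ 2) ^ (m + 1) / (m + 1)) (-Real.log (1 - y ^ 2)) :=
    hasSum_pow_div_log_of_abs_lt_one hy2
  have h2' : HasSum (fun m : ℕ => f (2 * m + 1)) (-Real.log (1 - y ^ 2) / 2) := by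
    have h := h2s.div_const 2
    have he : (fun m : ℕ => f (2 * m + 1)) = fun m : ℕ => (y ^ 2) ^ (m + 1) / (m + 1) / 2 := by
      funext m
      simp only [hf]
      have hp : y ^ (2 * m + 1 + 1) = (y ^ 2) ^ (m + 1) := by rw [← pow_mul]; ring_nf
      rw [div_div, hp]
      congr 1
      push_cast; ring
    rw [he]; exact h
  have hesum : Summable (fun m : ℕ => f (2 * m)) :=
    h1s.summable.comp_injective (fun a b hab => by omega)
  have hE : HasSum (fun m : ℕ => f (2 * m)) (∑' m : ℕ, f (2 * m)) := hesum.hasSum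
  have htot := hE.even_add_odd h2'
  have hEval : ∑' m : ℕ, f (2 * m) = -Real.log (1 - y) + Real.log (1 - y ^ 2) / 2 := by
    have := h1s.unique htot
    linarith
  rw [hEval] at hE
  have hlog : Real.log (1 - y ^ 2) = Real.log (1 - y) + Real.log (1 + y) := by
    rw [show (1 : ℝ) - y ^ 2 = (1 - y) * (1 + y) by ring,
      Real.log_mul (by linarith) (by linarith)]
  have he2 : (fun m : ℕ => f (2 * m)) = fun n : ℕ => y ^ (2 * n + 1) / (2 * n + 1) := by
    funext m; simp only [hf]; push_cast; ring_nf
  rw [he2, hlog] at hE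
  convert hE using 1; ring



lemma hasSum_Gf {s : ℝ} (hs : 0 < s) :
    HasSum (fun n : ℕ => Real.exp (-((2 * n + 1) * s)) / (2 * n + 1))
      ((Real.log (1 + Real.exp (-s)) - Real.log (1 - Real.exp (-s))) / 2) := by
  have h := hasSum_oddlog (y := Real.exp (-s)) (Real.exp_nonneg _)
    (Real.exp_lt_one_iff.mpr (by linarith))
  convert h using 2 with n
  rw [← Real.exp_nat_mul]
  congr 1
  push_cast
  ring

lemma Gf_bounds {s : ℝ} (hs : 0 < s) (hs1 : s ≤ 1) :
    -Real.log s / 2 ≤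
        (Real.log (1 + Real.exp (-s)) - Real.log (1 - Real.exp (-s))) / 2 ∧
      (Real.log (1 + Real.exp (-s)) - Real.log (1 - Real.exp (-s))) / 2 ≤
        -Real.log s / 2 + Real.log 2 := by
  have hy1 : Real.exp (-s) < 1 := Real.exp_lt_one_iff.mpr (by linarith)
  have hy0 : 0 < Real.exp (-s) := Real.exp_pos _
  have hub : 1 - Real.exp (-s) ≤ s := by
    have := Real.add_one_le_exp (-s); linarith
  have hlb : s / 2 ≤ 1 - Real.exp (-s) := by
    have h1 : Real.exp (-s) ≤ 1 / (1 + s) := by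
      have h2 : s + 1 ≤ Real.exp s := Real.add_one_le_exp s
      rw [Real.exp_neg, inv_eq_one_div, div_le_div_iff₀ (Real.exp_pos s) (by linarith)]
      linarith
    have h4 : 1 / (1 + s) ≤ 1 - s / 2 := by
      rw [div_le_iff₀ (by linarith)]
      nlinarith
    linarith
  have hlog1 : 0 ≤ Real.log (1 + Real.exp (-s)) := Real.log_nonneg (by linarith)
  have hlog2 : Real.log (1 + Real.exp (-s)) ≤ Real.log 2 :=
    Real.log_le_log (by linarith) (by linarith)
  have hlog3 : Real.log (1 - Real.exp (-s)) ≤ Real.log s :=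
    Real.log_le_log (by linarith) hub
  have hlog4 : Real.log s - Real.log 2 ≤ Real.log (1 - Real.exp (-s)) := by
    have := Real.log_le_log (by positivity : (0:ℝ) < s / 2) hlb
    rw [Real.log_div (by linarith) (by norm_num)] at this
    linarith
  constructor <;> linarith

noncomputable def S0f (t : ℝ) : ℝ := ∑' n : ℕ, 1 / (Real.exp ((2 * n + 1) * t) - 1)

lemma term_pos {t : ℝ} (ht : 0 < t) (n : ℕ) : (0:ℝ) < Real.exp ((2 * n + 1) * t) - 1 := by
  have h1 : 0 < (2 * (n:ℝ) + 1) * t := by positivity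
  have := Real.add_one_le_exp ((2 * (n:ℝ) + 1) * t)
  linarith

lemma S0_term_le {t : ℝ} (ht : 0 < t) (n : ℕ) :
    t * (1 / (Real.exp ((2 * n + 1) * t) - 1)) ≤
      Real.exp (-((2 * n + 1) * (t / 2))) / (2 * n + 1) := by
  set x : ℝ := (2 * n + 1) * t with hx
  have hxpos : 0 < x := by positivity
  have hc : (0:ℝ) < 2 * n + 1 := by positivity
  have hd := term_pos ht n
  have key : x ≤ Real.exp (x / 2) - Real.exp (-(x / 2)) := by
    have h := Real.self_le_sinh_iff.mpr (by positivity : (0:ℝ) ≤ x / 2)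
    rw [Real.sinh_eq] at h
    linarith
  have e1 : t * (1 / (Real.exp x - 1)) = (x / (Real.exp x - 1)) / (2 * n + 1) := by
    rw [hx]; field_simp
  have e2 : Real.exp (-((2 * (n:ℝ) + 1) * (t / 2))) = Real.exp (-(x / 2)) := by
    congr 1; rw [hx]; ring
  rw [e1, e2]
  have h2 : Real.exp (-(x / 2)) * (Real.exp x - 1) = Real.exp (x / 2) - Real.exp (-(x / 2)) := by
    rw [mul_sub, ← Real.exp_add, mul_one]
    congr 2; ring
  gcongr
  rw [div_le_iff₀ hd]
  rw [mul_comm] at h2 ⊢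
  linarith

lemma S0_term_ge {t : ℝ} (ht : 0 < t) (n : ℕ) :
    Real.exp (-((2 * n + 1) * t)) / (2 * n + 1) ≤
      t * (1 / (Real.exp ((2 * n + 1) * t) - 1)) := by
  set x : ℝ := (2 * n + 1) * t with hx
  have hxpos : 0 < x := by positivity
  have hc : (0:ℝ) < 2 * n + 1 := by positivity
  have hd := term_pos ht n
  have e1 : t * (1 / (Real.exp x - 1)) = (x / (Real.exp x - 1)) / (2 * n + 1) := by
    rw [hx]; field_simp
  rw [e1]
  have key : Real.exp (-x) * (Real.exp x - 1) = 1 - Real.exp (-x) := by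
    rw [mul_sub, ← Real.exp_add, mul_one]; simp
  have h3 : 1 - Real.exp (-x) ≤ x := by
    have := Real.add_one_le_exp (-x); linarith
  gcongr
  rw [le_div_iff₀ hd, mul_comm] at *
  linarith

lemma geo_hasSum {b : ℝ} (hb : 0 < b) :
    HasSum (fun n : ℕ => Real.exp (-((2 * n + 1) * b)))
      (1 / (Real.exp b - Real.exp (-b))) := by
  have hr : Real.exp (-(2 * b)) < 1 := Real.exp_lt_one_iff.mpr (by linarith)
  have h := (hasSum_geometric_of_lt_one (Real.exp_nonneg _) hr).mul_left (Real.exp (-b))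
  have he : (fun n : ℕ => Real.exp (-b) * Real.exp (-(2 * b)) ^ n) =
      fun n : ℕ => Real.exp (-((2 * n + 1) * b)) := by
    funext n
    rw [← Real.exp_nat_mul, ← Real.exp_add]
    congr 1; push_cast; ring
  rw [he] at h
  have hpos1 : 0 < Real.exp b - Real.exp (-b) := by
    have h2 : Real.exp (-b) < Real.exp b := Real.exp_lt_exp.mpr (by linarith)
    linarith
  have hpos2 : 0 < 1 - Real.exp (-(2 * b)) := by linarith
  convert h using 1
  · exact rfl
  rw [← div_eq_mul_inv, div_eq_div_iff hpos1.ne' hpos2.ne', one_mul]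
  have e1 : Real.exp (-b) * Real.exp b = 1 := by rw [← Real.exp_add]; simp
  have e2 : Real.exp (-b) * Real.exp (-b) = Real.exp (-(2 * b)) := by
    rw [← Real.exp_add]; congr 1; ring
  nlinarith [e1, e2]

lemma S0_summable {t : ℝ} (ht : 0 < t) :
    Summable (fun n : ℕ => 1 / (Real.exp ((2 * n + 1) * t) - 1)) := by
  apply Summable.of_nonneg_of_le (f := fun n : ℕ => (1 / t) * Real.exp (-((2 * n + 1) * (t / 2))))
    (fun n => by have := term_pos ht n; positivity)
  · intro n
    have h := S0_term_le ht n
    have hc : (1:ℝ) ≤ 2 * n + 1 := by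
      have : (0:ℝ) ≤ (n:ℝ) := Nat.cast_nonneg n
      linarith
    have h2 : Real.exp (-((2 * n + 1) * (t / 2))) / (2 * n + 1) ≤
        Real.exp (-((2 * n + 1) * (t / 2))) := div_le_self (Real.exp_nonneg _) hc
    have h3 : t * (1 / (Real.exp ((2 * n + 1) * t) - 1)) ≤
        Real.exp (-((2 * n + 1) * (t / 2))) := le_trans h h2
    calc (1:ℝ) / (Real.exp ((2 * n + 1) * t) - 1)
        = (t * (1 / (Real.exp ((2 * n + 1) * t) - 1))) / t := by
          have hX : Real.exp ((2 * n + 1) * t) - 1 ≠ 0 := (term_pos ht n).ne'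
          field_simp
      _ ≤ Real.exp (-((2 * n + 1) * (t / 2))) / t := by gcongr
      _ = (1 / t) * Real.exp (-((2 * n + 1) * (t / 2))) := by ring
  · exact ((geo_hasSum (by linarith : 0 < t / 2)).summable).mul_left (1 / t)

lemma S0_bounds {t : ℝ} (ht : 0 < t) (ht1 : t ≤ 1) :
    -Real.log t / 2 ≤ t * S0f t ∧ t * S0f t ≤ -Real.log t / 2 + 2 := by
  have hsum := S0_summable ht
  have htsum : t * S0f t = ∑' n : ℕ, t * (1 / (Real.exp ((2 * n + 1) * t) - 1)) := by
    rw [S0f, tsum_mul_left]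
  have hG1 := hasSum_Gf ht
  have hG2 := hasSum_Gf (by linarith : 0 < t / 2)
  have hlow : (Real.log (1 + Real.exp (-t)) - Real.log (1 - Real.exp (-t))) / 2 ≤
      t * S0f t := by
    rw [htsum, ← hG1.tsum_eq]
    exact Summable.tsum_le_tsum (fun n => S0_term_ge ht n) hG1.summable (hsum.mul_left t)
  have hup : t * S0f t ≤
      (Real.log (1 + Real.exp (-(t/2))) - Real.log (1 - Real.exp (-(t/2)))) / 2 := by
    rw [htsum, ← hG2.tsum_eq]
    exact Summable.tsum_le_tsum (fun n => S0_term_le ht n) (hsum.mul_left t) hG2.summable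
  have hb1 := (Gf_bounds ht ht1).1
  have hb2 := (Gf_bounds (by linarith : 0 < t / 2) (by linarith)).2
  have hlog : Real.log (t / 2) = Real.log t - Real.log 2 :=
    Real.log_div ht.ne' (by norm_num)
  have h2 : Real.log 2 < 0.6931471808 := Real.log_two_lt_d9
  constructor
  · linarith
  · rw [hlog] at hb2; linarith

noncomputable def Sf (a t : ℝ) : ℝ :=
  ∑' n : ℕ, Real.exp ((2 * n + 1) * a) / (Real.exp ((2 * n + 1) * t) - 1)

lemma Sf_term_le {a t : ℝ} (ha : 0 ≤ a) (hat : a < t) (n : ℕ) :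
    Real.exp ((2 * n + 1) * a) / (Real.exp ((2 * n + 1) * t) - 1) ≤
      1 / (Real.exp ((2 * n + 1) * t) - 1) + Real.exp (-((2 * n + 1) * (t - a))) := by
  have ht : 0 < t := lt_of_le_of_lt ha hat
  have hd := term_pos ht n
  have hc : (1:ℝ) ≤ 2 * n + 1 := by
    have : (0:ℝ) ≤ (n:ℝ) := Nat.cast_nonneg n; linarith
  have key : Real.exp ((2 * n + 1) * a) - 1 ≤
      Real.exp (-((2 * n + 1) * (t - a))) * (Real.exp ((2 * n + 1) * t) - 1) := by
    have e1 : Real.exp (-((2 * n + 1) * (t - a))) * Real.exp ((2 * n + 1) * t) =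
        Real.exp ((2 * n + 1) * a) := by rw [← Real.exp_add]; congr 1; ring
    have e2 : Real.exp (-((2 * (n:ℝ) + 1) * (t - a))) ≤ 1 :=
      Real.exp_le_one_iff.mpr (by nlinarith)
    nlinarith [Real.exp_pos (-((2 * (n:ℝ) + 1) * (t - a)))]
  have expand : Real.exp ((2 * n + 1) * a) / (Real.exp ((2 * n + 1) * t) - 1) =
      1 / (Real.exp ((2 * n + 1) * t) - 1) +
        (Real.exp ((2 * n + 1) * a) - 1) / (Real.exp ((2 * n + 1) * t) - 1) := by
    field_simp; ring
  rw [expand]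
  gcongr
  rw [div_le_iff₀ hd]
  exact key

lemma Sf_summable {a t : ℝ} (ha : 0 ≤ a) (hat : a < t) :
    Summable (fun n : ℕ => Real.exp ((2 * n + 1) * a) / (Real.exp ((2 * n + 1) * t) - 1)) := by
  have ht : 0 < t := lt_of_le_of_lt ha hat
  apply Summable.of_nonneg_of_le
    (f := fun n : ℕ => 1 / (Real.exp ((2 * n + 1) * t) - 1) +
      Real.exp (-((2 * n + 1) * (t - a))))
    (fun n => by have := term_pos ht n; positivity)
    (fun n => Sf_term_le ha hat n)
  exact (S0_summable ht).add (geo_hasSum (by linarith : 0 < t - a)).summable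

lemma Sf_bounds {a t : ℝ} (ha : 0 ≤ a) (hat : a < t) :
    S0f t ≤ Sf a t ∧
      Sf a t ≤ S0f t + 1 / (Real.exp (t - a) - Real.exp (-(t - a))) := by
  have ht : 0 < t := lt_of_le_of_lt ha hat
  constructor
  · apply Summable.tsum_le_tsum _ (S0_summable ht) (Sf_summable ha hat)
    intro n
    gcongr
    · exact le_of_lt (term_pos ht n)
    · exact Real.one_le_exp (by positivity)
  · have h := Summable.tsum_le_tsum (fun n => Sf_term_le ha hat n) (Sf_summable ha hat)
      ((S0_summable ht).add (geo_hasSum (by linarith : 0 < t - a)).summable)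
    rw [Summable.tsum_add (S0_summable ht) (geo_hasSum (by linarith : 0 < t - a)).summable,
      (geo_hasSum (by linarith : 0 < t - a)).tsum_eq] at h
    exact h

lemma sqrt_sq_add_le_of (u v c : ℝ) (hc : 0 ≤ c) :
    Real.sqrt (u ^ 2 + c) ≤ Real.sqrt (v ^ 2 + c) + |u - v| := by
  have hv : |v| ≤ Real.sqrt (v ^ 2 + c) := by
    rw [← Real.sqrt_sq_eq_abs]
    exact Real.sqrt_le_sqrt (by linarith)
  have h0 : 0 ≤ Real.sqrt (v ^ 2 + c) + |u - v| := by positivity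
  rw [show Real.sqrt (v ^ 2 + c) + |u - v| = Real.sqrt ((Real.sqrt (v ^ 2 + c) + |u - v|) ^ 2)
    from (Real.sqrt_sq h0).symm]
  apply Real.sqrt_le_sqrt
  have h1 : Real.sqrt (v ^ 2 + c) ^ 2 = v ^ 2 + c := Real.sq_sqrt (by positivity)
  have h2 : |u - v| ^ 2 = (u - v) ^ 2 := sq_abs _
  have h3 : v * (u - v) ≤ |v| * |u - v| := by
    calc v * (u - v) ≤ |v * (u - v)| := le_abs_self _
      _ = |v| * |u - v| := abs_mul _ _
  nlinarith [abs_nonneg (u - v), abs_nonneg v, mul_le_mul_of_nonneg_right hv (abs_nonneg (u - v))]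

lemma abs_sqrt_sq_add_sub (u v c : ℝ) (hc : 0 ≤ c) :
    |Real.sqrt (u ^ 2 + c) - Real.sqrt (v ^ 2 + c)| ≤ |u - v| := by
  rw [abs_sub_le_iff]
  constructor
  · linarith [sqrt_sq_add_le_of u v c hc]
  · have := sqrt_sq_add_le_of v u c hc
    rw [abs_sub_comm] at this
    linarith

lemma sinh_le_mul_exp {x : ℝ} (hx : 0 ≤ x) : Real.sinh x ≤ x * Real.exp x := by
  rw [Real.sinh_eq]
  have h1 : 1 - 2 * x ≤ Real.exp (-(2 * x)) := by
    have := Real.add_one_le_exp (-(2 * x)); linarith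
  have e1 : Real.exp (-(2 * x)) * Real.exp (2 * x) = 1 := by rw [← Real.exp_add]; simp
  have e2 : Real.exp (2 * x) = Real.exp x * Real.exp x := by rw [← Real.exp_add]; congr 1; ring
  have e3 : Real.exp (-x) * Real.exp x = 1 := by rw [← Real.exp_add]; simp
  have hp := Real.exp_pos x
  have hp2 := Real.exp_pos (-x)
  nlinarith [mul_le_mul_of_nonneg_right h1 (le_of_lt (Real.exp_pos (2 * x)))]

lemma arsinh_bounds {y : ℝ} (hy : 0 < y) :
    y - y ^ 2 ≤ Real.arsinh y ∧ Real.arsinh y ≤ y := by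
  have hub : Real.arsinh y ≤ y := by
    have h := Real.self_le_sinh_iff.mpr hy.le
    calc Real.arsinh y ≤ Real.arsinh (Real.sinh y) := Real.arsinh_le_arsinh.mpr h
      _ = y := Real.arsinh_sinh y
  refine ⟨?_, hub⟩
  have hx : 0 < Real.arsinh y := Real.arsinh_pos_iff.mpr hy
  have h1 : y ≤ Real.arsinh y * Real.exp y := by
    calc y = Real.sinh (Real.arsinh y) := (Real.sinh_arsinh y).symm
      _ ≤ Real.arsinh y * Real.exp (Real.arsinh y) := sinh_le_mul_exp hx.le
      _ ≤ Real.arsinh y * Real.exp y := by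
          have := Real.exp_le_exp.mpr hub
          nlinarith [hx]
  have h2 : 1 - y ≤ Real.exp (-y) := by have := Real.add_one_le_exp (-y); linarith
  have h3 : y * Real.exp (-y) ≤ Real.arsinh y := by
    have hep := Real.exp_pos y
    rw [Real.exp_neg]
    rw [mul_inv_le_iff₀ hep]
    linarith [h1]
  nlinarith [h3, h2, hy, Real.exp_pos (-y)]



lemma log274_le_two : Real.log (27 / 4) ≤ 2 := by
  rw [show (2:ℝ) = Real.log (Real.exp 2) from (Real.log_exp 2).symm]
  apply Real.log_le_log (by norm_num)
  have he := Real.exp_one_gt_d9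
  have e2 : Real.exp 2 = Real.exp 1 * Real.exp 1 := by
    rw [← Real.exp_add]; norm_num
  nlinarith

set_option maxHeartbeats 1600000 in
theorem lam2_asymptotics (r₁ r₂ : ℝ) (hr₁ : 0 < r₁) (hr₂ : 0 < r₂) :
    (fun ε => lam2 r₁ r₂ ε -
        3 / 2 * (1 / r₁ ^ 3 + 1 / r₂ ^ 3) * (r₁ * r₂ / (r₁ + r₂)) *
          Real.log (2 * r₁ * r₂ / ((r₁ + r₂) * ε))) =O[𝓝[>] (0 : ℝ)]
      (fun _ => (1 : ℝ)) := by
  have hr12 : 0 < r₁ + r₂ := by linarith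
  have hCt11 : ∀ ε : ℝ, Ct11 r₁ r₂ ε =
      6 * alphaBi r₁ r₂ ε * Sf (xi2 r₁ r₂ ε) (xi1 r₁ r₂ ε + xi2 r₁ r₂ ε) / r₁ ^ 3 := by
    intro ε; unfold Ct11 C11 Sf
    have := Real.pi_ne_zero; rw [div_mul_eq_mul_div, div_eq_div_iff (by positivity) (by positivity)]; ring
  have hCt22 : ∀ ε : ℝ, Ct22 r₁ r₂ ε =
      6 * alphaBi r₁ r₂ ε * Sf (xi1 r₁ r₂ ε) (xi1 r₁ r₂ ε + xi2 r₁ r₂ ε) / r₂ ^ 3 := by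
    intro ε; unfold Ct22 C22 Sf
    have := Real.pi_ne_zero; rw [div_mul_eq_mul_div, div_eq_div_iff (by positivity) (by positivity)]; ring
  have hCt12 : ∀ ε : ℝ, Ct12 r₁ r₂ ε =
      -(6 * alphaBi r₁ r₂ ε * S0f (xi1 r₁ r₂ ε + xi2 r₁ r₂ ε)) / r₁ ^ 3 := by
    intro ε; unfold Ct12 C12 S0f
    have := Real.pi_ne_zero; rw [div_mul_eq_mul_div, div_eq_div_iff (by positivity) (by positivity)]; ring
  have hCt21 : ∀ ε : ℝ, Ct21 r₁ r₂ ε =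
      -(6 * alphaBi r₁ r₂ ε * S0f (xi1 r₁ r₂ ε + xi2 r₁ r₂ ε)) / r₂ ^ 3 := by
    intro ε; unfold Ct21 C21 C12 S0f
    have := Real.pi_ne_zero; rw [div_mul_eq_mul_div, div_eq_div_iff (by positivity) (by positivity)]; ring
  set Rc : ℝ := r₁ * r₂ / (r₁ + r₂) with hRc
  have hRc0 : 0 < Rc := by positivity
  set q : ℝ := 1 / r₁ ^ 2 + 1 / r₂ ^ 2 with hqdef
  have hq0 : 0 < q := by positivity
  set P : ℝ := 1 / r₁ ^ 3 + 1 / r₂ ^ 3 with hPdef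
  have hP0 : 0 < P := by positivity
  set A₀ : ℝ := min (Rc / 2) (1 / (2 * Rc * q)) with hA0def
  have hA00 : 0 < A₀ := lt_min (by positivity) (by positivity)
  set ε₀ : ℝ := min r₁ (min r₂ (4 * A₀ ^ 2 / (27 * Rc))) with hε₀def
  have hε₀0 : 0 < ε₀ := lt_min hr₁ (lt_min hr₂ (by positivity))
  have hA0Rc : A₀ ≤ Rc / 2 := min_le_left _ _
  have hA0q : A₀ ≤ 1 / (2 * Rc * q) := min_le_right _ _
  have hε₀r₁ : ε₀ ≤ r₁ := min_le_left _ _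
  have hε₀r₂ : ε₀ ≤ r₂ := le_trans (min_le_right _ _) (min_le_left _ _)
  have hε₀A : ε₀ ≤ 4 * A₀ ^ 2 / (27 * Rc) := le_trans (min_le_right _ _) (min_le_right _ _)
  clear_value Rc q P A₀ ε₀
  clear hA0def hε₀def
  rw [Asymptotics.isBigO_iff]
  refine ⟨(3 / r₁ ^ 2 + 3 / r₂ ^ 2) + 3 * P / 2 * (21 * Rc + 8 * q * Rc ^ 3), ?_⟩
  have hmem : Set.Ioo (0:ℝ) ε₀ ∈ 𝓝[>] (0:ℝ) :=
    Ioo_mem_nhdsGT_of_mem ⟨le_refl 0, hε₀0⟩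
  filter_upwards [hmem] with ε hεm
  obtain ⟨hε0, hεu⟩ := hεm
  simp only [Real.norm_eq_abs, norm_one, mul_one]
  clear hmem
  have hεr₁ : ε ≤ r₁ := le_trans hεu.le hε₀r₁
  have hεr₂ : ε ≤ r₂ := le_trans hεu.le hε₀r₂
  have hεA : ε ≤ 4 * A₀ ^ 2 / (27 * Rc) := le_trans hεu.le hε₀A
  -- concrete facts about alphaBi and xi
  have ha0 : 0 < alphaBi r₁ r₂ ε := by
    rw [alphaBi]
    have h1 : 0 < ε * (2 * r₁ + ε) * (2 * r₂ + ε) * (2 * r₁ + 2 * r₂ + ε) := by positivity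
    positivity
  have ha2eq : (alphaBi r₁ r₂ ε) ^ 2 =
      ε * (2 * r₁ + ε) * (2 * r₂ + ε) * (2 * r₁ + 2 * r₂ + ε) / (4 * (r₁ + r₂ + ε) ^ 2) := by
    rw [alphaBi, div_pow, Real.sq_sqrt (by positivity)]
    congr 1; ring
  have hx1e : xi1 r₁ r₂ ε = Real.arsinh (alphaBi r₁ r₂ ε / r₁) := rfl
  have hx2e : xi2 r₁ r₂ ε = Real.arsinh (alphaBi r₁ r₂ ε / r₂) := rfl
  have hx1bnd : alphaBi r₁ r₂ ε / r₁ - (alphaBi r₁ r₂ ε / r₁) ^ 2 ≤ xi1 r₁ r₂ ε ∧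
      xi1 r₁ r₂ ε ≤ alphaBi r₁ r₂ ε / r₁ := by
    rw [hx1e]; exact arsinh_bounds (div_pos ha0 hr₁)
  have hx2bnd : alphaBi r₁ r₂ ε / r₂ - (alphaBi r₁ r₂ ε / r₂) ^ 2 ≤ xi2 r₁ r₂ ε ∧
      xi2 r₁ r₂ ε ≤ alphaBi r₁ r₂ ε / r₂ := by
    rw [hx2e]; exact arsinh_bounds (div_pos ha0 hr₂)
  have hx1pos : 0 < xi1 r₁ r₂ ε := by
    rw [hx1e]; exact Real.arsinh_pos_iff.mpr (div_pos ha0 hr₁)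
  have hx2pos : 0 < xi2 r₁ r₂ ε := by
    rw [hx2e]; exact Real.arsinh_pos_iff.mpr (div_pos ha0 hr₂)
  have hs1 : Real.sinh (xi1 r₁ r₂ ε) = alphaBi r₁ r₂ ε / r₁ := by
    rw [hx1e]; exact Real.sinh_arsinh _
  have hs2 : Real.sinh (xi2 r₁ r₂ ε) = alphaBi r₁ r₂ ε / r₂ := by
    rw [hx2e]; exact Real.sinh_arsinh _
  have h11 := hCt11 ε
  have h22 := hCt22 ε
  have h12 := hCt12 ε
  have h21 := hCt21 ε
  -- generalize to opaque variables
  obtain ⟨a, eqa⟩ : ∃ x, alphaBi r₁ r₂ ε = x := ⟨_, rfl⟩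
  obtain ⟨x1, eqx1⟩ : ∃ x, xi1 r₁ r₂ ε = x := ⟨_, rfl⟩
  obtain ⟨x2, eqx2⟩ : ∃ x, xi2 r₁ r₂ ε = x := ⟨_, rfl⟩
  rw [eqa] at ha0 ha2eq hx1bnd hx2bnd hs1 hs2 h11 h22 h12 h21
  rw [eqx1] at hx1bnd hx1pos hs1 h11 h22 h12 h21
  rw [eqx2] at hx2bnd hx2pos hs2 h11 h22 h12 h21
  obtain ⟨t, eqt⟩ : ∃ x, x1 + x2 = x := ⟨_, rfl⟩
  rw [eqt] at h11 h22 h12 h21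
  clear hCt11 hCt22 hCt12 hCt21 hx1e hx2e eqa eqx1 eqx2
  have ht0 : 0 < t := by rw [← eqt]; linarith
  -- alpha bounds
  have ha2lb : ε * Rc / 2 ≤ a ^ 2 := by
    rw [ha2eq, hRc]
    rw [show ε * (r₁ * r₂ / (r₁ + r₂)) / 2 = ε * r₁ * r₂ / (2 * (r₁ + r₂)) by
      field_simp]
    rw [div_le_div_iff₀ (by positivity) (by positivity)]
    calc ε * r₁ * r₂ * (4 * (r₁ + r₂ + ε) ^ 2)
        ≤ ε * r₁ * r₂ * (4 * (2 * (r₁ + r₂)) ^ 2) := by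
          gcongr ε * r₁ * r₂ * (4 * ?_ ^ 2) <;> first | positivity | linarith
      _ = ε * (2 * r₁) * (2 * r₂) * (2 * r₁ + 2 * r₂) * (2 * (r₁ + r₂)) := by ring
      _ ≤ ε * (2 * r₁ + ε) * (2 * r₂ + ε) * (2 * r₁ + 2 * r₂ + ε) * (2 * (r₁ + r₂)) := by
          gcongr ε * ?_ * ?_ * ?_ * (2 * (r₁ + r₂)) <;> first | positivity | linarith
  have ha2ub : a ^ 2 ≤ 27 * ε * Rc / 4 := by
    rw [ha2eq, hRc]
    rw [show 27 * ε * (r₁ * r₂ / (r₁ + r₂)) / 4 = 27 * ε * r₁ * r₂ / (4 * (r₁ + r₂)) by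
      field_simp]
    rw [div_le_div_iff₀ (by positivity) (by positivity)]
    calc ε * (2 * r₁ + ε) * (2 * r₂ + ε) * (2 * r₁ + 2 * r₂ + ε) * (4 * (r₁ + r₂))
        ≤ ε * (3 * r₁) * (3 * r₂) * (3 * (r₁ + r₂)) * (4 * (r₁ + r₂)) := by
          gcongr ε * ?_ * ?_ * ?_ * (4 * (r₁ + r₂)) <;> first | positivity | linarith
      _ = 27 * ε * r₁ * r₂ * (4 * (r₁ + r₂) ^ 2) := by ring
      _ ≤ 27 * ε * r₁ * r₂ * (4 * (r₁ + r₂ + ε) ^ 2) := by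
          gcongr 27 * ε * r₁ * r₂ * (4 * ?_ ^ 2) <;> first | positivity | linarith
  have haA : a ≤ A₀ := by
    have h1 : a ^ 2 ≤ A₀ ^ 2 := by
      rw [le_div_iff₀ (by positivity)] at hεA
      linarith
    calc a = Real.sqrt (a ^ 2) := (Real.sqrt_sq ha0.le).symm
      _ ≤ Real.sqrt (A₀ ^ 2) := Real.sqrt_le_sqrt h1
      _ = A₀ := Real.sqrt_sq hA00.le
  have haRc : a ≤ Rc / 2 := le_trans haA hA0Rc
  have haq : a ≤ 1 / (2 * Rc * q) := le_trans haA hA0q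
  have haqRc : a * q * Rc ≤ 1 / 2 := by
    rw [le_div_iff₀ (by positivity)] at haq
    linarith
  -- t bounds
  have hsum1 : Rc * (a / r₁ + a / r₂) = a := by rw [hRc]; field_simp; ring
  have htubRc : Rc * t ≤ a := by
    have h1 : t ≤ a / r₁ + a / r₂ := by rw [← eqt]; linarith [hx1bnd.2, hx2bnd.2]
    linarith [mul_le_mul_of_nonneg_left h1 hRc0.le]
  have htlbRc : a ≤ Rc * t + Rc * q * a ^ 2 := by
    have e1 : (a / r₁) ^ 2 + (a / r₂) ^ 2 = a ^ 2 * q := by rw [hqdef]; field_simp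
    have h1 : a / r₁ + a / r₂ - a ^ 2 * q ≤ t := by
      rw [← eqt]; linarith [e1, hx1bnd.1, hx2bnd.1]
    linarith [mul_le_mul_of_nonneg_left h1 hRc0.le]
  have htlb2 : a ≤ 2 * Rc * t := by
    linarith [mul_le_mul_of_nonneg_right haqRc ha0.le]
  have ht1 : t ≤ 1 / 2 := by
    have h : Rc * t ≤ Rc * (1 / 2) := by linarith
    exact le_of_mul_le_mul_left h hRc0
  -- S0 facts
  have hS0nn : 0 ≤ S0f t := tsum_nonneg (fun n => by have := term_pos ht0 n; positivity)
  have htS := S0_bounds ht0 (by linarith : t ≤ 1)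
  -- Sf bounds
  have hx2lt : x2 < t := by rw [← eqt]; linarith
  have hx1lt : x1 < t := by rw [← eqt]; linarith
  have hb2 := Sf_bounds hx2pos.le hx2lt
  have hb1 := Sf_bounds hx1pos.le hx1lt
  have hdx2 : t - x2 = x1 := by rw [← eqt]; ring
  have hdx1 : t - x1 = x2 := by rw [← eqt]; ring
  rw [hdx2] at hb2
  rw [hdx1] at hb1
  have hsinh1 : Real.exp x1 - Real.exp (-x1) = 2 * (a / r₁) := by
    rw [← hs1, Real.sinh_eq]; ring
  have hsinh2 : Real.exp x2 - Real.exp (-x2) = 2 * (a / r₂) := by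
    rw [← hs2, Real.sinh_eq]; ring
  rw [hsinh1, show (1:ℝ) / (2 * (a / r₁)) = r₁ / (2 * a) from by
    rw [div_eq_div_iff (by positivity) (by positivity)]; field_simp] at hb2
  rw [hsinh2, show (1:ℝ) / (2 * (a / r₂)) = r₂ / (2 * a) from by
    rw [div_eq_div_iff (by positivity) (by positivity)]; field_simp] at hb1
  obtain ⟨S, hSd⟩ : ∃ x, S0f t = x := ⟨_, rfl⟩
  obtain ⟨F2, hF2d⟩ : ∃ x, Sf x2 t = x := ⟨_, rfl⟩
  obtain ⟨F1, hF1d⟩ : ∃ x, Sf x1 t = x := ⟨_, rfl⟩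
  rw [hSd] at hS0nn htS h12 h21
  rw [hSd, hF2d] at hb2
  rw [hSd, hF1d] at hb1
  rw [hF2d] at h11
  rw [hF1d] at h22
  -- Ct bounds
  have e11 : 6 * a * (S + r₁ / (2 * a)) / r₁ ^ 3 = 6 * a * S / r₁ ^ 3 + 3 / r₁ ^ 2 := by
    field_simp; ring
  have e22 : 6 * a * (S + r₂ / (2 * a)) / r₂ ^ 3 = 6 * a * S / r₂ ^ 3 + 3 / r₂ ^ 2 := by
    field_simp; ring
  have hC11b : 6 * a * S / r₁ ^ 3 ≤ Ct11 r₁ r₂ ε ∧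
      Ct11 r₁ r₂ ε ≤ 6 * a * S / r₁ ^ 3 + 3 / r₁ ^ 2 := by
    rw [h11]
    have h6a : (0:ℝ) ≤ 6 * a := by linarith
    constructor
    · rw [div_le_div_iff_of_pos_right (by positivity : (0:ℝ) < r₁ ^ 3)]
      exact mul_le_mul_of_nonneg_left hb2.1 h6a
    · rw [← e11, div_le_div_iff_of_pos_right (by positivity : (0:ℝ) < r₁ ^ 3)]
      exact mul_le_mul_of_nonneg_left hb2.2 h6a
  have hC22b : 6 * a * S / r₂ ^ 3 ≤ Ct22 r₁ r₂ ε ∧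
      Ct22 r₁ r₂ ε ≤ 6 * a * S / r₂ ^ 3 + 3 / r₂ ^ 2 := by
    rw [h22]
    have h6a : (0:ℝ) ≤ 6 * a := by linarith
    constructor
    · rw [div_le_div_iff_of_pos_right (by positivity : (0:ℝ) < r₂ ^ 3)]
      exact mul_le_mul_of_nonneg_left hb1.1 h6a
    · rw [← e22, div_le_div_iff_of_pos_right (by positivity : (0:ℝ) < r₂ ^ 3)]
      exact mul_le_mul_of_nonneg_left hb1.2 h6a
  -- the eigenvalue
  obtain ⟨u, hu⟩ : ∃ x, 6 * a * S = x := ⟨_, rfl⟩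
  rw [hu] at hC11b hC22b
  have hu0 : 0 ≤ u := by rw [← hu]; positivity
  rw [show -(6 * a * S) / r₁ ^ 3 = -(u / r₁ ^ 3) from by rw [← hu]; ring] at h12
  rw [show -(6 * a * S) / r₂ ^ 3 = -(u / r₂ ^ 3) from by rw [← hu]; ring] at h21
  have hprod : 4 * Ct12 r₁ r₂ ε * Ct21 r₁ r₂ ε = 4 * u ^ 2 / (r₁ ^ 3 * r₂ ^ 3) := by
    rw [h12, h21]; field_simp
  have hcnn : 0 ≤ 4 * u ^ 2 / (r₁ ^ 3 * r₂ ^ 3) := by positivity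
  have hxc : (u / r₁ ^ 3 - u / r₂ ^ 3) ^ 2 + 4 * u ^ 2 / (r₁ ^ 3 * r₂ ^ 3) = (u * P) ^ 2 := by
    rw [hPdef]; field_simp; ring
  have hsq : Real.sqrt ((u / r₁ ^ 3 - u / r₂ ^ 3) ^ 2 + 4 * u ^ 2 / (r₁ ^ 3 * r₂ ^ 3)) = u * P := by
    rw [hxc, Real.sqrt_sq (by positivity)]
  have habs := abs_sqrt_sq_add_sub (Ct11 r₁ r₂ ε - Ct22 r₁ r₂ ε)
    (u / r₁ ^ 3 - u / r₂ ^ 3) (4 * u ^ 2 / (r₁ ^ 3 * r₂ ^ 3)) hcnn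
  rw [hsq] at habs
  have hup : u / r₁ ^ 3 + u / r₂ ^ 3 = u * P := by rw [hPdef]; ring
  have hX : |Ct11 r₁ r₂ ε - Ct22 r₁ r₂ ε - (u / r₁ ^ 3 - u / r₂ ^ 3)| ≤
      3 / r₁ ^ 2 + 3 / r₂ ^ 2 := by
    rw [abs_le]
    constructor <;> linarith [hC11b.1, hC11b.2, hC22b.1, hC22b.2]
  have hs' := le_trans habs hX
  have hlam : |lam2 r₁ r₂ ε - u * P| ≤ 3 / r₁ ^ 2 + 3 / r₂ ^ 2 := by
    unfold lam2
    rw [hprod]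
    rw [abs_le] at hs' ⊢
    constructor <;>
      linarith [hup, hC11b.1, hC11b.2, hC22b.1, hC22b.2, hs'.1, hs'.2]
  -- log estimates
  obtain ⟨g, hg⟩ : ∃ x, a / t = x := ⟨_, rfl⟩
  have hg1 : Rc ≤ g := by rw [← hg, le_div_iff₀ ht0]; linarith
  have hg2 : g ≤ 2 * Rc := by rw [← hg, div_le_iff₀ ht0]; linarith
  have hg3 : g ≤ Rc + 2 * q * Rc ^ 2 * a := by
    rw [← hg, div_le_iff₀ ht0]
    linarith [htlbRc, mul_le_mul_of_nonneg_left htlb2 (by positivity : (0:ℝ) ≤ Rc * q * a)]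
  have hLt0 : Real.log t ≤ 0 := Real.log_nonpos ht0.le (by linarith)
  have hnLt : 0 ≤ -Real.log t := by linarith
  have hLt1 : Real.log t ≤ Real.log a - Real.log Rc := by
    have h1 : t ≤ a / Rc := by rw [le_div_iff₀ hRc0]; linarith
    have h2 := Real.log_le_log ht0 h1
    rw [Real.log_div ha0.ne' hRc0.ne'] at h2
    linarith
  have hLt2 : Real.log a - Real.log Rc - Real.log 2 ≤ Real.log t := by
    have h1 : a / (2 * Rc) ≤ t := by rw [div_le_iff₀ (by positivity)]; linarith [htlb2]
    have h2 := Real.log_le_log (by positivity) h1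
    rw [Real.log_div ha0.ne' (by positivity), Real.log_mul (by norm_num) hRc0.ne'] at h2
    linarith
  have hLa1 : Real.log ε + Real.log Rc - Real.log 2 ≤ 2 * Real.log a := by
    have h := Real.log_le_log (by positivity) ha2lb
    rw [Real.log_pow, Real.log_div (by positivity) (by norm_num),
      Real.log_mul hε0.ne' hRc0.ne'] at h
    push_cast at h
    linarith
  have hLa2 : 2 * Real.log a ≤ Real.log ε + Real.log Rc + 2 := by
    have h := Real.log_le_log (by positivity : (0:ℝ) < a ^ 2) ha2ub
    rw [Real.log_pow, show (27:ℝ) * ε * Rc / 4 = 27 / 4 * (ε * Rc) by ring,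
      Real.log_mul (by norm_num) (by positivity), Real.log_mul hε0.ne' hRc0.ne'] at h
    have h274 : Real.log (27 / 4) ≤ 2 := log274_le_two
    push_cast at h
    linarith
  have hL2a : 0 ≤ Real.log 2 := Real.log_nonneg (by norm_num)
  have hL2b : Real.log 2 ≤ 1 := by
    have := Real.log_two_lt_d9; linarith
  have hf8 : a * (Real.log 2 + Real.log Rc - Real.log a) ≤ 2 * Rc := by
    have h1 : Real.log (2 * Rc / a) ≤ 2 * Rc / a - 1 :=
      Real.log_le_sub_one_of_pos (by positivity)
    have h2 : Real.log (2 * Rc / a) = Real.log 2 + Real.log Rc - Real.log a := by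
      rw [Real.log_div (by positivity) ha0.ne', Real.log_mul (by norm_num) hRc0.ne']
    have h3 := mul_le_mul_of_nonneg_left h1 ha0.le
    have h4 : a * (2 * Rc / a - 1) ≤ 2 * Rc := by
      rw [mul_sub, mul_div_cancel₀ _ ha0.ne']
      linarith
    rw [h2] at h3
    linarith
  obtain ⟨D, hD⟩ : ∃ x, t * S + Real.log t / 2 = x := ⟨_, rfl⟩
  have hD0 : 0 ≤ D := by rw [← hD]; linarith [htS.1]
  have hD2 : D ≤ 2 := by rw [← hD]; linarith [htS.2]
  have hexp4 : 4 * a * S = -2 * g * Real.log t + 4 * g * D := by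
    rw [← hD, ← hg]; field_simp; ring
  -- product bounds
  have hg0 : 0 ≤ g := le_trans hRc0.le hg1
  have p1 : 4 * g * D ≤ 16 * Rc := by
    linarith [mul_le_mul hg2 hD2 hD0 (by positivity : (0:ℝ) ≤ 2 * Rc)]
  have p2 : 0 ≤ 4 * g * D := by linarith [mul_nonneg hg0 hD0]
  have p3 : -2 * g * Real.log t ≤
      2 * Rc * (-Real.log t) + 4 * q * Rc ^ 2 * (a * (-Real.log t)) := by
    linarith [mul_le_mul_of_nonneg_right hg3 hnLt]
  have hmlt : -Real.log t ≤ Real.log 2 + Real.log Rc - Real.log a := by linarith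
  have p4 : a * (-Real.log t) ≤ 2 * Rc := by
    linarith [mul_le_mul_of_nonneg_left hmlt ha0.le, hf8]
  have p5 : 2 * Rc * (-Real.log t) ≤ 2 * Rc * (Real.log 2 + Real.log Rc - Real.log a) := by
    linarith [mul_le_mul_of_nonneg_left hmlt (by positivity : (0:ℝ) ≤ 2 * Rc)]
  have p6 : 2 * Rc * (-Real.log t) ≤ -2 * g * Real.log t := by
    linarith [mul_le_mul_of_nonneg_right hg1 hnLt]
  have p8 : 2 * Rc * (Real.log Rc - Real.log a) ≤ 2 * Rc * (-Real.log t) := by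
    linarith [mul_le_mul_of_nonneg_left (show Real.log Rc - Real.log a ≤ -Real.log t by
      linarith) (by positivity : (0:ℝ) ≤ 2 * Rc)]
  have hq4 : 4 * q * Rc ^ 2 * (a * (-Real.log t)) ≤ 8 * q * Rc ^ 3 := by
    linarith [mul_le_mul_of_nonneg_left p4 (by positivity : (0:ℝ) ≤ 4 * q * Rc ^ 2)]
  have hc1 : Rc * (Real.log ε + Real.log Rc - Real.log 2) ≤ Rc * (2 * Real.log a) :=
    mul_le_mul_of_nonneg_left hLa1 hRc0.le
  have hc2 : Rc * (2 * Real.log a) ≤ Rc * (Real.log ε + Real.log Rc + 2) :=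
    mul_le_mul_of_nonneg_left hLa2 hRc0.le
  have hRcL2 : Rc * Real.log 2 ≤ Rc := by
    linarith [mul_le_mul_of_nonneg_left hL2b hRc0.le]
  have hqRc3 : 0 ≤ q * Rc ^ 3 := by positivity
  have hEub : 4 * a * S - Rc * (Real.log 2 + Real.log Rc - Real.log ε) ≤
      21 * Rc + 8 * q * Rc ^ 3 := by
    rw [hexp4]
    linarith [p3, p5, hq4, p1, hc1, hRcL2, hqRc3, hRc0.le]
  have hElb : -(21 * Rc + 8 * q * Rc ^ 3) ≤
      4 * a * S - Rc * (Real.log 2 + Real.log Rc - Real.log ε) := by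
    rw [hexp4]
    linarith [p6, p8, p2, hc2, hRcL2, hqRc3, hRc0.le]
  have habsE : |4 * a * S - Rc * (Real.log 2 + Real.log Rc - Real.log ε)| ≤
      21 * Rc + 8 * q * Rc ^ 3 := abs_le.mpr ⟨hElb, hEub⟩
  have hPRc : u * P - 3 / 2 * P * Rc * (Real.log 2 + Real.log Rc - Real.log ε) =
      3 * P / 2 * (4 * a * S - Rc * (Real.log 2 + Real.log Rc - Real.log ε)) := by
    rw [← hu]; ring
  have hlogarg : Real.log (2 * r₁ * r₂ / ((r₁ + r₂) * ε)) =
      Real.log 2 + Real.log Rc - Real.log ε := by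
    rw [show 2 * r₁ * r₂ / ((r₁ + r₂) * ε) = 2 * Rc / ε from by rw [hRc]; field_simp]
    rw [Real.log_div (by positivity) hε0.ne', Real.log_mul (by norm_num) hRc0.ne']
  rw [hlogarg]
  have htri := abs_sub_le (lam2 r₁ r₂ ε) (u * P)
    (3 / 2 * P * Rc * (Real.log 2 + Real.log Rc - Real.log ε))
  have habs2 : |u * P - 3 / 2 * P * Rc * (Real.log 2 + Real.log Rc - Real.log ε)| ≤
      3 * P / 2 * (21 * Rc + 8 * q * Rc ^ 3) := by
    rw [hPRc, abs_mul, abs_of_nonneg (by positivity : (0:ℝ) ≤ 3 * P / 2)]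
    exact mul_le_mul_of_nonneg_left habsE (by positivity)
  linarith [htri, hlam, habs2]
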